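/- The group G generated by the six involutions π_{(ij)} (over all pairs {i,j} ⊆ [4]) acting on Γ₄³ is abelian, every element of G is an involution, and G acts transitively on Γ₄³. -/

import Mathlib

abbrev Triple := Fin 4 × Fin 4 × Fin 4

def rot (t : Triple) : Triple := (t.2.1, t.2.2, t.1)

def DistinctTriple (t : Triple) : Prop := t.1 ≠ t.2.1 ∧ t.1 ≠ t.2.2 ∧ t.2.1 ≠ t.2.2

def cyc (t u : Triple) : Prop := u = t ∨ u = rot t ∨ u = rot (rot t)

def fourth (t : Triple) : Fin 4 := 2 - (t.1 + t.2.1 + t.2.2)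

def piRaw (s : Finset (Fin 4)) (t : Triple) : Triple :=
  if s = {t.1, t.2.1} then (t.2.1, t.1, fourth t)
  else if s = {t.2.1, t.2.2} then (t.2.2, t.2.1, fourth t)
  else if s = {t.1, t.2.2} then (t.1, t.2.2, fourth t)
  else if s = {t.2.2, fourth t} then (t.1, t.2.1, fourth t)
  else if s = {t.2.1, fourth t} then (t.2.2, t.1, fourth t)
  else if s = {t.1, fourth t} then (t.2.1, t.2.2, fourth t)
  else t

/-- an element of the group generated by the `π_α`: a word in the generators -/
def word (L : List (Finset (Fin 4))) (t : Triple) : Triple := L.foldr piRaw t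

/-- the word uses only the generators `π_α` for 2-element subsets `α ⊆ [4]` -/
def ValidWord (L : List (Finset (Fin 4))) : Prop := ∀ s ∈ L, s.card = 2

instance : DecidablePred DistinctTriple := fun t => by unfold DistinctTriple; infer_instance
instance (t u : Triple) : Decidable (cyc t u) := by unfold cyc; infer_instance

lemma cyc_refl (t : Triple) : cyc t t := Or.inl rfl

lemma cyc_symm {t u : Triple} (h : cyc t u) : cyc u t := by
  rcases h with rfl | rfl | rfl
  · exact .inl rfl
  · exact .inr (.inr rfl)
  · exact .inr (.inl rfl)

lemma cyc_trans {t u v : Triple} (h1 : cyc t u) (h2 : cyc u v) : cyc t v := by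
  rcases h1 with rfl | rfl | rfl <;> rcases h2 with rfl | rfl | rfl <;>
    first
      | exact .inl rfl
      | exact .inr (.inl rfl)
      | exact .inr (.inr rfl)

lemma drot : ∀ t : Triple, DistinctTriple t → DistinctTriple (rot t) := by decide

lemma pres : ∀ (s : Finset (Fin 4)) (t : Triple), DistinctTriple t →
    DistinctTriple (piRaw s t) := by decide

lemma invol : ∀ (s : Finset (Fin 4)) (t : Triple), DistinctTriple t →
    cyc (piRaw s (piRaw s t)) t := by decide

lemma prot : ∀ (s : Finset (Fin 4)) (t : Triple), DistinctTriple t →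
    cyc (piRaw s t) (piRaw s (rot t)) := by decide

set_option maxRecDepth 10000 in
set_option maxHeartbeats 2000000 in
lemma pcomm : ∀ (s s' : Finset (Fin 4)), s.card = 2 → s'.card = 2 → ∀ t : Triple,
    DistinctTriple t → cyc (piRaw s (piRaw s' t)) (piRaw s' (piRaw s t)) := by decide

lemma pcongr (s : Finset (Fin 4)) {t u : Triple} (ht : DistinctTriple t) (h : cyc t u) :
    cyc (piRaw s t) (piRaw s u) := by
  rcases h with rfl | rfl | rfl
  · exact cyc_refl _
  · exact prot s t ht
  · exact cyc_trans (prot s t ht) (prot s (rot t) (drot t ht))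

lemma word_cons (a : Finset (Fin 4)) (L : List (Finset (Fin 4))) (t : Triple) :
    word (a :: L) t = piRaw a (word L t) := rfl

lemma word_pres : ∀ (L : List (Finset (Fin 4))) (t : Triple), DistinctTriple t →
    DistinctTriple (word L t)
  | [], t, ht => ht
  | a :: L, t, ht => pres a _ (word_pres L t ht)

lemma valid_tail {a : Finset (Fin 4)} {L : List (Finset (Fin 4))} (h : ValidWord (a :: L)) :
    ValidWord L := fun s hs => h s (List.mem_cons_of_mem a hs)

lemma valid_head {a : Finset (Fin 4)} {L : List (Finset (Fin 4))} (h : ValidWord (a :: L)) :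
    a.card = 2 := h a List.mem_cons_self

lemma word_comm_piRaw : ∀ (L : List (Finset (Fin 4))), ValidWord L →
    ∀ (s : Finset (Fin 4)), s.card = 2 → ∀ t : Triple, DistinctTriple t →
    cyc (word L (piRaw s t)) (piRaw s (word L t))
  | [], _, s, _, t, _ => cyc_refl _
  | a :: L, hL, s, hs, t, ht => by
    have h1 := word_comm_piRaw L (valid_tail hL) s hs t ht
    have h2 := pcongr a (word_pres L _ (pres s t ht)) h1
    have h3 := pcomm a s (valid_head hL) hs (word L t) (word_pres L t ht)
    exact cyc_trans h2 h3

lemma word_abelian : ∀ (L₁ L₂ : List (Finset (Fin 4))), ValidWord L₁ → ValidWord L₂ →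
    ∀ t : Triple, DistinctTriple t → cyc (word L₁ (word L₂ t)) (word L₂ (word L₁ t))
  | [], L₂, _, _, t, _ => cyc_refl _
  | a :: L₁, L₂, h1, h2, t, ht => by
    have ih := word_abelian L₁ L₂ (valid_tail h1) h2 t ht
    have c1 := pcongr a (word_pres L₁ _ (word_pres L₂ t ht)) ih
    have c2 := word_comm_piRaw L₂ h2 a (valid_head h1) (word L₁ t) (word_pres L₁ t ht)
    exact cyc_trans c1 (cyc_symm c2)

lemma word_invol : ∀ (L : List (Finset (Fin 4))), ValidWord L →
    ∀ t : Triple, DistinctTriple t → cyc (word L (word L t)) t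
  | [], _, t, _ => cyc_refl t
  | a :: L, hL, t, ht => by
    have hX : DistinctTriple (word L (word L t)) :=
      word_pres L _ (word_pres L t ht)
    have h1 := word_comm_piRaw L (valid_tail hL) a (valid_head hL) (word L t)
      (word_pres L t ht)
    have h2 := pcongr a (word_pres L _ (pres a _ (word_pres L t ht))) h1
    have h3 := invol a _ hX
    have ih := word_invol L (valid_tail hL) t ht
    exact cyc_trans h2 (cyc_trans h3 ih)

def gens : List (Finset (Fin 4)) := [{0,1},{0,2},{0,3},{1,2},{1,3},{2,3}]

def cands : List (List (Finset (Fin 4))) :=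
  [] :: gens.map (fun s => [s]) ++ gens.flatMap (fun s => gens.map (fun s' => [s, s']))

lemma cands_valid : ∀ L ∈ cands, ValidWord L := by unfold ValidWord; decide

set_option maxRecDepth 10000 in
set_option maxHeartbeats 4000000 in
lemma trans_dec : ∀ t u : Triple, DistinctTriple t → DistinctTriple u →
    (cands.any (fun L => decide (cyc (word L t) u))) = true := by decide

theorem group_abelian_involutive_transitive :
    (∀ L₁ L₂ : List (Finset (Fin 4)), ValidWord L₁ → ValidWord L₂ →
      ∀ t : Triple, DistinctTriple t → cyc (word L₁ (word L₂ t)) (word L₂ (word L₁ t))) ∧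
    (∀ L : List (Finset (Fin 4)), ValidWord L →
      ∀ t : Triple, DistinctTriple t → cyc (word L (word L t)) t) ∧
    (∀ t u : Triple, DistinctTriple t → DistinctTriple u →
      ∃ L : List (Finset (Fin 4)), ValidWord L ∧ cyc (word L t) u) := by
  refine ⟨word_abelian, word_invol, fun t u ht hu => ?_⟩
  obtain ⟨L, hL, h⟩ := List.any_eq_true.mp (trans_dec t u ht hu)
  exact ⟨L, cands_valid L hL, of_decide_eq_true h⟩
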